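/- Let α ∈ (0,1), β > 0, and φ(y) = αy − β/y for y ≠ 0. Then φ preserves the probability measure dμ(x) = √(β(1−α)) dx / (π[x²(1−α) + β]): for every Borel set A ⊆ ℝ, μ(φ^{-1} A) = μ(A). -/

import Mathlib

open MeasureTheory

private lemma key_algebra (α β x q c P : ℝ) (hα0 : 0 < α) (hα1 : α < 1) (hβ : 0 < β)
    (hP : 0 < P) (hq0 : 0 < q) (hq : q ^ 2 = x ^ 2 + 4 * α * β) :
    (1 + x / q) / (2 * α) * (c / (P * (((x + q) / (2 * α)) ^ 2 * (1 - α) + β))) +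
      (1 - x / q) / (2 * α) * (c / (P * (((x - q) / (2 * α)) ^ 2 * (1 - α) + β))) =
      c / (P * (x ^ 2 * (1 - α) + β)) := by
  have h1α : 0 < 1 - α := by linarith
  have hDp : 0 < ((x + q) / (2 * α)) ^ 2 * (1 - α) + β := by positivity
  have hDm : 0 < ((x - q) / (2 * α)) ^ 2 * (1 - α) + β := by positivity
  have hD : 0 < x ^ 2 * (1 - α) + β := by positivity
  field_simp
  linear_combination (-q ^ 3 * c + 2 * α * q ^ 3 * c - α ^ 2 * q ^ 3 * c - 7 * α ^ 2 * x ^ 2 * q * c +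
    4 * α ^ 3 * x ^ 2 * q * c - 4 * α ^ 2 * β * q * c + x ^ 2 * q * c + 4 * α ^ 3 * β * q * c +
    2 * α * x ^ 2 * q * c) * hq

set_option maxHeartbeats 1000000 in
theorem alpha_boole_preserves_cauchy (α β : ℝ) (hα : α ∈ Set.Ioo (0 : ℝ) 1) (hβ : 0 < β)
    (φ : ℝ → ℝ) (hφ : ∀ y, φ y = α * y - β / y)
    (A : Set ℝ) (hA : MeasurableSet A) :
    ∫ x in φ ⁻¹' A, Real.sqrt (β * (1 - α)) / (Real.pi * (x ^ 2 * (1 - α) + β)) =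
      ∫ x in A, Real.sqrt (β * (1 - α)) / (Real.pi * (x ^ 2 * (1 - α) + β)) := by
  obtain ⟨hα0, hα1⟩ := hα
  have h1α : 0 < 1 - α := by linarith
  have hπ : 0 < Real.pi := Real.pi_pos
  set c := Real.sqrt (β * (1 - α)) with hc
  have hc0 : 0 ≤ c := Real.sqrt_nonneg _
  set g : ℝ → ℝ := fun x => c / (Real.pi * (x ^ 2 * (1 - α) + β)) with hgdef
  set q : ℝ → ℝ := fun x => Real.sqrt (x ^ 2 + 4 * α * β) with hqdef
  have hq2 : ∀ x : ℝ, (q x) ^ 2 = x ^ 2 + 4 * α * β := fun x =>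
    Real.sq_sqrt (by positivity)
  have hq0 : ∀ x : ℝ, 0 < q x := fun x => Real.sqrt_pos.mpr (by positivity)
  have hqx : ∀ x : ℝ, |x| < q x := by
    intro x
    have h1 : |x| = Real.sqrt (x ^ 2) := (Real.sqrt_sq_eq_abs x).symm
    rw [h1]
    exact Real.sqrt_lt_sqrt (by positivity) (by nlinarith)
  set ψp : ℝ → ℝ := fun x => (x + q x) / (2 * α) with hψpdef
  set ψm : ℝ → ℝ := fun x => (x - q x) / (2 * α) with hψmdef
  set dp : ℝ → ℝ := fun x => (1 + x / q x) / (2 * α) with hdpdef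
  set dm : ℝ → ℝ := fun x => (1 - x / q x) / (2 * α) with hdmdef
  have hψp_pos : ∀ x, 0 < ψp x := by
    intro x
    have := hqx x; have := neg_abs_le x
    have hnum : 0 < x + q x := by linarith
    positivity
  have hψm_neg : ∀ x, ψm x < 0 := by
    intro x
    have := hqx x; have := le_abs_self x
    have hnum : x - q x < 0 := by linarith
    exact div_neg_of_neg_of_pos hnum (by positivity)
  have hdp_pos : ∀ x, 0 < dp x := by
    intro x
    have h1 : -1 < x / q x := by
      rw [lt_div_iff₀ (hq0 x)]
      have := hqx x; have := neg_abs_le x; linarith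
    have : 0 < 1 + x / q x := by linarith
    positivity
  have hdm_pos : ∀ x, 0 < dm x := by
    intro x
    have h1 : x / q x < 1 := by
      rw [div_lt_one (hq0 x)]
      have := hqx x; have := le_abs_self x; linarith
    have hnum : 0 < 1 - x / q x := by linarith
    positivity
  have hφψp : ∀ x, φ (ψp x) = x := by
    intro x
    have hs0 : x + q x ≠ 0 := by
      have h1 := hqx x; have h2 := neg_abs_le x
      have : 0 < x + q x := by linarith
      exact this.ne'
    rw [hφ, hψpdef]
    simp only
    field_simp [hα0.ne', hs0]
    linear_combination hq2 x
  have hφψm : ∀ x, φ (ψm x) = x := by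
    intro x
    have hs0 : x - q x ≠ 0 := by
      have h1 := hqx x; have h2 := le_abs_self x
      have : x - q x < 0 := by linarith
      exact this.ne
    rw [hφ, hψmdef]
    simp only
    field_simp [hα0.ne', hs0]
    linear_combination hq2 x
  have hinjp : Function.Injective ψp := by
    intro a b h
    have := congrArg φ h
    rwa [hφψp, hφψp] at this
  have hinjm : Function.Injective ψm := by
    intro a b h
    have := congrArg φ h
    rwa [hφψm, hφψm] at this
  have hψpφ : ∀ y : ℝ, 0 < y → ψp (φ y) = y := by
    intro y hy
    have hy0 : y ≠ 0 := ne_of_gt hy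
    have hpos : 0 < α * y + β / y := by positivity
    have hk : (φ y) ^ 2 + 4 * α * β = (α * y + β / y) ^ 2 := by
      rw [hφ]; field_simp; ring
    have hq' : q (φ y) = α * y + β / y := by
      rw [hqdef]; simp only; rw [hk, Real.sqrt_sq hpos.le]
    rw [hψpdef]; simp only
    rw [hq', hφ]
    field_simp
    ring
  have hψmφ : ∀ y : ℝ, y < 0 → ψm (φ y) = y := by
    intro y hy
    have hy0 : y ≠ 0 := ne_of_lt hy
    have hpos : 0 ≤ -(α * y + β / y) := by
      have h1 : α * y < 0 := mul_neg_of_pos_of_neg hα0 hy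
      have h2 : β / y < 0 := div_neg_of_pos_of_neg hβ hy
      linarith
    have hk : (φ y) ^ 2 + 4 * α * β = (-(α * y + β / y)) ^ 2 := by
      rw [hφ]; field_simp; ring
    have hq' : q (φ y) = -(α * y + β / y) := by
      rw [hqdef]; simp only; rw [hk, Real.sqrt_sq hpos]
    rw [hψmdef]; simp only
    rw [hq', hφ]
    field_simp
    ring
  have himp : ψp '' A = φ ⁻¹' A ∩ Set.Ioi 0 := by
    ext y
    constructor
    · rintro ⟨x, hx, rfl⟩
      exact ⟨by simp [Set.mem_preimage, hφψp x, hx], hψp_pos x⟩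
    · rintro ⟨hy1, hy2⟩
      exact ⟨φ y, hy1, hψpφ y hy2⟩
  have himm : ψm '' A = φ ⁻¹' A ∩ Set.Iio 0 := by
    ext y
    constructor
    · rintro ⟨x, hx, rfl⟩
      exact ⟨by simp [Set.mem_preimage, hφψm x, hx], hψm_neg x⟩
    · rintro ⟨hy1, hy2⟩
      exact ⟨φ y, hy1, hψmφ y hy2⟩
  -- derivatives
  have hderiv_q : ∀ x : ℝ, HasDerivAt q (x / q x) x := by
    intro x
    have h1 : HasDerivAt (fun x : ℝ => x ^ 2 + 4 * α * β) (2 * x) x := by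
      simpa using ((hasDerivAt_pow 2 x).add_const (4 * α * β))
    have h2 := (Real.hasDerivAt_sqrt (x := x ^ 2 + 4 * α * β) (by positivity)).comp x h1
    rw [hqdef]
    refine HasDerivAt.congr_deriv h2 ?_
    have := hq0 x
    rw [hqdef] at this
    field_simp
  have hderivp : ∀ x : ℝ, HasDerivAt ψp (dp x) x := by
    intro x
    have := ((hasDerivAt_id x).add (hderiv_q x)).div_const (2 * α)
    rw [hψpdef, hdpdef]
    simpa using this
  have hderivm : ∀ x : ℝ, HasDerivAt ψm (dm x) x := by
    intro x
    have := ((hasDerivAt_id x).sub (hderiv_q x)).div_const (2 * α)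
    rw [hψmdef, hdmdef]
    simpa using this
  -- integrability of g
  have hgcont : Continuous g := by
    rw [hgdef]
    apply continuous_const.div
    · continuity
    · intro x
      have : 0 < x ^ 2 * (1 - α) + β := by positivity
      positivity
  have hg_int : Integrable g := by
    set m := min (1 - α) β with hm
    have hm0 : 0 < m := lt_min h1α hβ
    apply Integrable.mono' ((integrable_inv_one_add_sq).const_mul (c / (Real.pi * m)))
      hgcont.aestronglyMeasurable
    filter_upwards with x
    have hD : 0 < x ^ 2 * (1 - α) + β := by positivity
    have hgx : 0 ≤ g x := by rw [hgdef]; positivity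
    rw [Real.norm_eq_abs, abs_of_nonneg hgx, hgdef]
    simp only
    have hb : m * (1 + x ^ 2) ≤ x ^ 2 * (1 - α) + β := by
      have h1 : m ≤ 1 - α := min_le_left _ _
      have h2 : m ≤ β := min_le_right _ _
      nlinarith [sq_nonneg x]
    have h3 : c / (Real.pi * m) * (1 + x ^ 2)⁻¹ = c / (Real.pi * (m * (1 + x ^ 2))) := by
      rw [← div_eq_mul_inv, div_div, mul_assoc]
    rw [h3]
    exact div_le_div_of_nonneg_left hc0 (by positivity)
      (mul_le_mul_of_nonneg_left hb hπ.le)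
  -- measurability
  have hφmeas : Measurable φ := by
    have h : φ = fun y => α * y - β * y⁻¹ := by
      funext y; rw [hφ, div_eq_mul_inv]
    rw [h]
    exact (measurable_id.const_mul α).sub (measurable_inv.const_mul β)
  have hSp : MeasurableSet (φ ⁻¹' A ∩ Set.Ioi 0) := (hφmeas hA).inter measurableSet_Ioi
  have hSm : MeasurableSet (φ ⁻¹' A ∩ Set.Iio 0) := (hφmeas hA).inter measurableSet_Iio
  have hdisj : Disjoint (φ ⁻¹' A ∩ Set.Ioi 0) (φ ⁻¹' A ∩ Set.Iio 0) := by
    rw [Set.disjoint_left]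
    rintro x ⟨-, hx1⟩ ⟨-, hx2⟩
    exact absurd (Set.mem_Ioi.mp hx1) (not_lt.mpr (Set.mem_Iio.mp hx2).le)
  have hae : (φ ⁻¹' A : Set ℝ) =ᵐ[volume]
      (((φ ⁻¹' A ∩ Set.Ioi 0) ∪ (φ ⁻¹' A ∩ Set.Iio 0) : Set ℝ)) := by
    have h0 : ∀ᵐ x : ℝ, x ≠ 0 := by
      have : volume ({0} : Set ℝ) = 0 := Real.volume_singleton
      rw [MeasureTheory.ae_iff]
      convert this using 2
      ext x; simp
    filter_upwards [h0] with x hx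
    have : x ∈ φ ⁻¹' A ↔ x ∈ (φ ⁻¹' A ∩ Set.Ioi 0) ∪ (φ ⁻¹' A ∩ Set.Iio 0) := by
      constructor
      · intro hmem
        rcases lt_or_gt_of_ne hx with h | h
        · exact Or.inr ⟨hmem, h⟩
        · exact Or.inl ⟨hmem, h⟩
      · rintro (⟨hmem, -⟩ | ⟨hmem, -⟩) <;> exact hmem
    exact propext this
  have hsplit : ∫ x in φ ⁻¹' A, g x =
      (∫ x in φ ⁻¹' A ∩ Set.Ioi 0, g x) + ∫ x in φ ⁻¹' A ∩ Set.Iio 0, g x := by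
    rw [setIntegral_congr_set hae]
    exact setIntegral_union hdisj hSm hg_int.integrableOn hg_int.integrableOn
  have hderivWp : ∀ x ∈ A, HasDerivWithinAt ψp (dp x) A x :=
    fun x _ => (hderivp x).hasDerivWithinAt
  have hderivWm : ∀ x ∈ A, HasDerivWithinAt ψm (dm x) A x :=
    fun x _ => (hderivm x).hasDerivWithinAt
  have hplus : ∫ x in φ ⁻¹' A ∩ Set.Ioi 0, g x = ∫ x in A, |dp x| * g (ψp x) := by
    rw [← himp, integral_image_eq_integral_abs_deriv_smul hA hderivWp hinjp.injOn g]
    simp [smul_eq_mul]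
  have hminus : ∫ x in φ ⁻¹' A ∩ Set.Iio 0, g x = ∫ x in A, |dm x| * g (ψm x) := by
    rw [← himm, integral_image_eq_integral_abs_deriv_smul hA hderivWm hinjm.injOn g]
    simp [smul_eq_mul]
  have hip : IntegrableOn (fun x => |dp x| • g (ψp x)) A := by
    rw [← integrableOn_image_iff_integrableOn_abs_deriv_smul hA hderivWp hinjp.injOn g]
    exact hg_int.integrableOn
  have him : IntegrableOn (fun x => |dm x| • g (ψm x)) A := by
    rw [← integrableOn_image_iff_integrableOn_abs_deriv_smul hA hderivWm hinjm.injOn g]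
    exact hg_int.integrableOn
  have hkey : ∀ x : ℝ, |dp x| * g (ψp x) + |dm x| * g (ψm x) = g x := by
    intro x
    rw [abs_of_pos (hdp_pos x), abs_of_pos (hdm_pos x)]
    rw [hgdef, hψpdef, hψmdef, hdpdef, hdmdef]
    simp only
    exact key_algebra α β x (q x) c Real.pi hα0 hα1 hβ hπ (hq0 x) (hq2 x)
  calc ∫ x in φ ⁻¹' A, g x
      = (∫ x in φ ⁻¹' A ∩ Set.Ioi 0, g x) + ∫ x in φ ⁻¹' A ∩ Set.Iio 0, g x := hsplit
    _ = (∫ x in A, |dp x| * g (ψp x)) + ∫ x in A, |dm x| * g (ψm x) := by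
        rw [hplus, hminus]
    _ = ∫ x in A, (|dp x| * g (ψp x) + |dm x| * g (ψm x)) := by
        rw [← integral_add (by simpa only [smul_eq_mul] using hip.integrable) (by simpa only [smul_eq_mul] using him.integrable)]
    _ = ∫ x in A, g x := by
        apply setIntegral_congr_fun hA
        intro x _
        exact hkey x
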